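/- If for each i ∈ [n] the nonnegative random variable X_i has continuous distribution function F_i, and t(n,s) satisfies s = ∑_{i=1}^n ∫_0^{t(n,s)} x dF_i(x), then E[max{|A| : A ⊆ [n], ∑_{i∈A} X_i ≤ s}] ≤ ∑_{i=1}^n F_i(t(n,s)). -/

import Mathlib

open MeasureTheory ProbabilityTheory Set

/-- The Bruss-Robertson maximal function. -/
noncomputable def knapMax {n : ℕ} (x : Fin n → ℝ) (s : ℝ) : ℕ :=
  (Finset.univ.powerset.filter (fun A => ∑ i ∈ A, x i ≤ s)).sup Finset.card

lemma knapMax_le_aux {n : ℕ} (x : Fin n → ℝ) (s t : ℝ) (ht : 0 < t) (hs : 0 ≤ s) :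
    (knapMax x s : ℝ) ≤ ((Finset.univ.filter fun i => x i ≤ t).card : ℝ)
      + (s - ∑ i ∈ Finset.univ.filter (fun i => x i ≤ t), x i) / t := by
  classical
  obtain ⟨A, hA, hcard⟩ := Finset.exists_mem_eq_sup
    (Finset.univ.powerset.filter (fun A => ∑ i ∈ A, x i ≤ s))
    ⟨∅, by simp [hs]⟩ Finset.card
  rw [Finset.mem_filter] at hA
  have hAs : ∑ i ∈ A, x i ≤ s := hA.2
  rw [knapMax, hcard]
  set small := Finset.univ.filter (fun i => x i ≤ t) with hsmall
  set As := A.filter (fun i => x i ≤ t) with hAsdef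
  set Ab := A.filter (fun i => ¬ x i ≤ t) with hAbdef
  have h1 : As.card + Ab.card = A.card := Finset.card_filter_add_card_filter_not _
  have h2 : ∑ i ∈ As, x i + ∑ i ∈ Ab, x i = ∑ i ∈ A, x i :=
    Finset.sum_filter_add_sum_filter_not _ _ _
  have h3 : (Ab.card : ℝ) * t ≤ ∑ i ∈ Ab, x i := by
    have := Finset.card_nsmul_le_sum Ab x t (fun i hi => by
      simp only [hAbdef, Finset.mem_filter] at hi; linarith [not_le.mp hi.2])
    simpa [nsmul_eq_mul] using this
  have h4 : As ⊆ small := fun i hi => by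
    simp only [hAsdef, Finset.mem_filter] at hi
    simp [hsmall, hi.2]
  have h5 : ∑ i ∈ small \ As, x i ≤ ((small \ As).card : ℝ) * t := by
    have := Finset.sum_le_card_nsmul (small \ As) x t (fun i hi => by
      simp only [Finset.mem_sdiff, hsmall, Finset.mem_filter] at hi; exact hi.1.2)
    simpa [nsmul_eq_mul] using this
  have h6 : ∑ i ∈ small \ As, x i + ∑ i ∈ As, x i = ∑ i ∈ small, x i :=
    Finset.sum_sdiff h4
  have h7 : ((small \ As).card : ℝ) = (small.card : ℝ) - As.card := by
    rw [Finset.card_sdiff_of_subset h4, Nat.cast_sub (Finset.card_le_card h4)]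
  have hc : (A.card : ℝ) = (As.card : ℝ) + Ab.card := by
    rw [← h1]; push_cast; ring
  have h8 : (A.card : ℝ) - small.card ≤ (s - ∑ i ∈ small, x i) / t := by
    rw [le_div_iff₀ ht]
    nlinarith
  linarith

/-- Extended Bruss-Robertson inequality: neither independence nor identical
distributions are required. -/
theorem extended_bruss_robertson {Ω : Type*} [MeasurableSpace Ω] (μ : Measure Ω)
    [IsProbabilityMeasure μ] (n : ℕ) (X : Fin n → Ω → ℝ)
    (hX : ∀ i, Measurable (X i)) (hpos : ∀ i ω, 0 ≤ X i ω)
    (ν : Fin n → Measure ℝ) (hprob : ∀ i, IsProbabilityMeasure (ν i))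
    (hlaw : ∀ i, μ.map (X i) = ν i)
    (hcont : ∀ i, Continuous (cdf (ν i)))
    (s t : ℝ) (hs : 0 < s) (ht : 0 < t)
    (hts : s = ∑ i : Fin n, ∫ x in Ioc (0:ℝ) t, x ∂(ν i)) :
    ∫ ω, (knapMax (fun i => X i ω) s : ℝ) ∂μ ≤ ∑ i : Fin n, cdf (ν i) t := by
  classical
  -- the two families of auxiliary functions
  set f1 : Fin n → Ω → ℝ := fun i ω => if X i ω ≤ t then (1:ℝ) else 0 with hf1
  set f2 : Fin n → Ω → ℝ := fun i ω => if X i ω ≤ t then X i ω else 0 with hf2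
  have hset : ∀ i, MeasurableSet {ω | X i ω ≤ t} := fun i =>
    measurableSet_le (hX i) measurable_const
  have hm1 : ∀ i, Measurable (f1 i) := fun i =>
    Measurable.ite (hset i) measurable_const measurable_const
  have hm2 : ∀ i, Measurable (f2 i) := fun i =>
    Measurable.ite (hset i) (hX i) measurable_const
  have hi1 : ∀ i, Integrable (f1 i) μ := fun i => by
    refine (integrable_const (1:ℝ)).mono' (hm1 i).aestronglyMeasurable ?_
    filter_upwards with ω
    by_cases h : X i ω ≤ t <;> simp [hf1, h]
  have hi2 : ∀ i, Integrable (f2 i) μ := fun i => by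
    refine (integrable_const t).mono' (hm2 i).aestronglyMeasurable ?_
    filter_upwards with ω
    by_cases h : X i ω ≤ t
    · simpa [hf2, h, abs_of_nonneg (hpos i ω)] using h
    · simpa [hf2, h] using ht.le
  -- the dominating function g
  set g : Ω → ℝ := fun ω => (∑ i, f1 i ω) + (s - ∑ i, f2 i ω) / t with hg
  have hgi : Integrable g μ := by
    apply Integrable.add (integrable_finset_sum _ (fun i _ => hi1 i))
    exact (((integrable_const s).sub (integrable_finset_sum _ (fun i _ => hi2 i))).div_const t)
  -- pointwise bound
  have hpt : ∀ ω, (knapMax (fun i => X i ω) s : ℝ) ≤ g ω := by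
    intro ω
    have := knapMax_le_aux (fun i => X i ω) s t ht hs.le
    have e1 : ((Finset.univ.filter fun i => X i ω ≤ t).card : ℝ) = ∑ i, f1 i ω := by
      rw [Finset.card_filter]
      push_cast
      simp [hf1, apply_ite (Nat.cast : ℕ → ℝ)]
    have e2 : ∑ i ∈ Finset.univ.filter (fun i => X i ω ≤ t), X i ω = ∑ i, f2 i ω := by
      rw [Finset.sum_filter]
    rw [e1, e2] at this
    exact this
  -- main estimate
  have hmono : ∫ ω, (knapMax (fun i => X i ω) s : ℝ) ∂μ ≤ ∫ ω, g ω ∂μ := by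
    refine integral_mono_of_nonneg ?_ hgi (Filter.Eventually.of_forall hpt)
    filter_upwards with ω
    positivity
  refine hmono.trans ?_
  -- compute the integral of g
  have hmap : ∀ i, ∀ {h : ℝ → ℝ}, AEStronglyMeasurable h (ν i) →
      ∫ ω, h (X i ω) ∂μ = ∫ x, h x ∂(ν i) := by
    intro i h hh
    rw [← hlaw i, integral_map (hX i).aemeasurable (by rwa [hlaw i])]
  -- a.e. nonnegativity under ν i
  have hnn : ∀ i, ∀ᵐ x ∂(ν i), 0 ≤ x := by
    intro i
    rw [← hlaw i, ae_map_iff (hX i).aemeasurable measurableSet_Ici]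
    exact Filter.Eventually.of_forall (hpos i)
  have hint1 : ∀ i, ∫ ω, f1 i ω ∂μ = cdf (ν i) t := by
    intro i
    have : ∫ ω, f1 i ω ∂μ = ∫ x, (Iic t).indicator (fun _ => (1:ℝ)) x ∂(ν i) := by
      rw [← hmap i ((aestronglyMeasurable_indicator_iff measurableSet_Iic).mpr
        aestronglyMeasurable_const)]
      congr 1 with ω
    rw [this, integral_indicator_const _ measurableSet_Iic, cdf_eq_real]
    simp
  have hint2 : ∀ i, ∫ ω, f2 i ω ∂μ = ∫ x in Ioc (0:ℝ) t, x ∂(ν i) := by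
    intro i
    have h1 : ∫ ω, f2 i ω ∂μ = ∫ x, (Iic t).indicator id x ∂(ν i) := by
      rw [← hmap i ((aestronglyMeasurable_indicator_iff measurableSet_Iic).mpr
        aestronglyMeasurable_id)]
      congr 1 with ω
    have h2 : ∫ x, (Iic t).indicator id x ∂(ν i) = ∫ x, (Ioc (0:ℝ) t).indicator id x ∂(ν i) := by
      refine integral_congr_ae ?_
      filter_upwards [hnn i] with x hx
      rcases eq_or_lt_of_le hx with h | h
      · simp [Set.indicator_apply, ← h, ht.le]
      · by_cases h' : x ≤ t <;> simp [Set.indicator_apply, h, h', ht.le]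
    rw [h1, h2, integral_indicator measurableSet_Ioc]
    simp
  -- putting everything together
  have hsum1 : Integrable (fun ω => ∑ i, f1 i ω) μ :=
    integrable_finset_sum _ (fun i _ => hi1 i)
  have hsum2 : Integrable (fun ω => ∑ i, f2 i ω) μ :=
    integrable_finset_sum _ (fun i _ => hi2 i)
  have hsub : Integrable (fun ω => s - ∑ i, f2 i ω) μ := (integrable_const s).sub hsum2
  have : ∫ ω, g ω ∂μ = (∑ i, cdf (ν i) t) + (s - ∑ i, ∫ x in Ioc (0:ℝ) t, x ∂(ν i)) / t := by
    calc ∫ ω, g ω ∂μ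
        = (∫ ω, (∑ i, f1 i ω) ∂μ) + ∫ ω, (s - ∑ i, f2 i ω) / t ∂μ :=
          integral_add hsum1 (hsub.div_const t)
      _ = (∫ ω, (∑ i, f1 i ω) ∂μ) + (∫ ω, (s - ∑ i, f2 i ω) ∂μ) / t := by
          rw [integral_div]
      _ = (∫ ω, (∑ i, f1 i ω) ∂μ) + ((∫ (_ : Ω), s ∂μ) - ∫ ω, (∑ i, f2 i ω) ∂μ) / t := by
          rw [integral_sub (integrable_const s) hsum2]
      _ = (∑ i, ∫ ω, f1 i ω ∂μ) + (s - ∑ i, ∫ ω, f2 i ω ∂μ) / t := by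
          rw [integral_finset_sum _ (fun i _ => hi1 i), integral_finset_sum _ (fun i _ => hi2 i),
            integral_const]
          simp
      _ = (∑ i, cdf (ν i) t) + (s - ∑ i, ∫ x in Ioc (0:ℝ) t, x ∂(ν i)) / t := by
          rw [Finset.sum_congr rfl (fun i _ => hint1 i), Finset.sum_congr rfl (fun i _ => hint2 i)]
  rw [this, ← hts]
  simp
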